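/- arXiv:1408.2166 — 7 statements merged into one kernel-verified Lean document; each statement's English description precedes it below -/
import Mathlib

section
/- Let T be a family of linear operators on a nonzero finite-dimensional vector space V over a field F such that the T-invariant subspaces of V form a chain under inclusion (T is uniserial). Suppose there is a basis of V relative to which every element of T is represented by an upper triangular matrix. Then for each position (i, i+1) on the first superdiagonal, there exists some element of T whose matrix has a nonzero entry at position (i, i+1). -/
/-- A family of endomorphisms is uniserial if its invariant subspaces form a
chain under inclusion. -/
def IsUniserialFamily {F V : Type*} [Field F] [AddCommGroup V] [Module F V]
    (T : Set (Module.End F V)) : Prop :=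
  IsChain (· ≤ ·) {W : Submodule F V | ∀ f ∈ T, W.map f ≤ W}

theorem stmt0 {F V : Type*} [Field F] [AddCommGroup V] [Module F V]
    [FiniteDimensional F V] {n : ℕ} (b : Module.Basis (Fin n) F V)
    (T : Set (Module.End F V)) (hT : IsUniserialFamily T)
    (htri : ∀ f ∈ T, (LinearMap.toMatrix b b f).BlockTriangular id)
    (i j : Fin n) (hij : (j : ℕ) = (i : ℕ) + 1) :
    ∃ f ∈ T, (LinearMap.toMatrix b b f) i j ≠ 0 := by
  by_contra h
  push_neg at h
  have hilt : i < j := by rw [Fin.lt_iff_val_lt_val, hij]; omega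
  set A : Submodule F V := Submodule.span F (b '' {k | k ≤ i}) with hA
  set B : Submodule F V := Submodule.span F (b '' ({k | k ≤ j} \ {i})) with hB
  have key : ∀ f ∈ T, ∀ (m k : Fin n), b.repr (f (b k)) m = LinearMap.toMatrix b b f m k := by
    intro f hf m k
    rw [LinearMap.toMatrix_apply]
  have hAinv : ∀ f ∈ T, A.map f ≤ A := by
    intro f hf
    rw [hA, Submodule.map_span, ← Set.image_comp]
    apply Submodule.span_le.2
    rintro _ ⟨k, hk, rfl⟩
    simp only [Function.comp_apply]
    rw [SetLike.mem_coe, Module.Basis.mem_span_image]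
    intro m hm
    simp only [Finset.mem_coe, Finsupp.mem_support_iff] at hm
    rw [key f hf] at hm
    have := htri f hf
    by_contra hmi
    simp only [Set.mem_setOf_eq, not_le] at hmi
    exact hm (this (show id k < id m from lt_of_le_of_lt hk hmi))
  have hBinv : ∀ f ∈ T, B.map f ≤ B := by
    intro f hf
    rw [hB, Submodule.map_span, ← Set.image_comp]
    apply Submodule.span_le.2
    rintro _ ⟨k, hk, rfl⟩
    simp only [Function.comp_apply]
    rw [SetLike.mem_coe, Module.Basis.mem_span_image]
    intro m hm
    simp only [Finset.mem_coe, Finsupp.mem_support_iff] at hm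
    rw [key f hf] at hm
    obtain ⟨hkj, hki⟩ := hk
    simp only [Set.mem_setOf_eq] at hkj
    have hki : k ≠ i := hki
    constructor
    · -- m ≤ j
      by_contra hmj
      simp only [Set.mem_setOf_eq, not_le] at hmj
      exact hm (htri f hf (show id k < id m from lt_of_le_of_lt hkj hmj))
    · -- m ≠ i
      intro hmi
      subst hmi
      rcases lt_or_eq_of_le hkj with hkj' | rfl
      · -- k < j, k ≠ i ⇒ k < i, so m = i > k entry is below diagonal
        have hk_lt_i : k < m := by
          rw [Fin.lt_iff_val_lt_val] at hkj' ⊢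
          rcases lt_trichotomy (k : ℕ) (m : ℕ) with h'|h'|h'
          · exact h'
          · exact absurd (Fin.val_injective h') hki
          · omega
        exact hm (htri f hf (show id k < id m from hk_lt_i))
      · exact hm (h f hf)
  have hAmem : A ∈ {W : Submodule F V | ∀ f ∈ T, W.map f ≤ W} := hAinv
  have hBmem : B ∈ {W : Submodule F V | ∀ f ∈ T, W.map f ≤ W} := hBinv
  have hbiA : b i ∈ A := Submodule.subset_span ⟨i, le_refl i, rfl⟩
  have hbjB : b j ∈ B := Submodule.subset_span ⟨j, ⟨le_refl j, fun hji => absurd (hji : j = i) (ne_of_gt hilt)⟩, rfl⟩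
  have hbiB : b i ∉ B := by
    rw [Module.Basis.self_mem_span_image]
    exact fun hmem => hmem.2 rfl
  have hbjA : b j ∉ A := by
    rw [Module.Basis.self_mem_span_image]
    exact fun hmem => absurd hmem (not_le_of_gt hilt)
  have hne : A ≠ B := fun e => hbiB (e ▸ hbiA)
  rcases hT hAmem hBmem hne with hle | hle
  · exact hbiB (hle hbiA)
  · exact hbjA (hle hbjB)
end

section
/- Let A be an upper triangular m×m matrix over a field F. Then there exists an invertible upper triangular matrix P with all diagonal entries equal to 1 such that B = P^{-1} A P satisfies: whenever the diagonal entries B_{ii} and B_{jj} are distinct, the entry B_{ij} is zero. -/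
private lemma diag_mul_tri {F : Type*} [Field F] {m : ℕ}
    {M N : Matrix (Fin m) (Fin m) F} (hM : M.BlockTriangular id)
    (hN : N.BlockTriangular id) (i : Fin m) : (M * N) i i = M i i * N i i := by
  rw [Matrix.mul_apply]
  apply Finset.sum_eq_single i
  · intro r _ hr
    rcases lt_or_gt_of_ne hr with h | h
    · rw [hM (show id r < id i from h), zero_mul]
    · rw [hN (show id i < id r from h), mul_zero]
  · intro h; exact absurd (Finset.mem_univ i) h

private lemma step_lemma {F : Type*} [Field F] {m d : ℕ}
    (B : Matrix (Fin m) (Fin m) F) (hB : B.BlockTriangular id) :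
    ∃ Q : Matrix (Fin m) (Fin m) F, IsUnit Q ∧ Q.BlockTriangular id ∧ (∀ i, Q i i = 1) ∧
      (∀ k l : Fin m, (l : ℕ) ≤ (k : ℕ) + d → (Q⁻¹ * B * Q) k l = B k l) ∧
      (∀ k l : Fin m, (l : ℕ) = (k : ℕ) + d + 1 → B k k ≠ B l l →
        (Q⁻¹ * B * Q) k l = 0) := by
  classical
  set N : Matrix (Fin m) (Fin m) F :=
    fun k l => if ((l : ℕ) = (k : ℕ) + d + 1 ∧ B k k ≠ B l l)
      then B k l / (B l l - B k k) else 0 with hNdef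
  set Q : Matrix (Fin m) (Fin m) F := 1 + N with hQdef
  have hNtr : ∀ k l : Fin m, ¬((l : ℕ) = (k : ℕ) + d + 1) → N k l = 0 := by
    intro k l h
    simp only [hNdef]
    rw [if_neg]
    tauto
  have hQt : Q.BlockTriangular id := by
    intro k l hkl
    have hkl' : (l : ℕ) < (k : ℕ) := hkl
    have h1 : (1 : Matrix (Fin m) (Fin m) F) k l = 0 :=
      Matrix.one_apply_ne (by intro hc; rw [hc] at hkl'; omega)
    have h2 : N k l = 0 := hNtr k l (by omega)
    simp [hQdef, Matrix.add_apply, h1, h2]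
  have hQdiag : ∀ i, Q i i = 1 := by
    intro i
    have h2 : N i i = 0 := hNtr i i (by omega)
    simp [hQdef, Matrix.add_apply, h2]
  have hdet : Q.det = 1 := by
    rw [Matrix.det_of_upperTriangular hQt]
    simp [hQdiag]
  have hdetu : IsUnit Q.det := by rw [hdet]; exact isUnit_one
  have hQu : IsUnit Q := (Matrix.isUnit_iff_isUnit_det Q).mpr hdetu
  set B' : Matrix (Fin m) (Fin m) F := Q⁻¹ * B * Q with hB'def
  have hrel : Q * B' = B * Q := by
    rw [hB'def, ← Matrix.mul_assoc, ← Matrix.mul_assoc, Matrix.mul_nonsing_inv Q hdetu,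
      Matrix.one_mul]
  have hentry : ∀ k l, B' k l = B k l + (B * N) k l - (N * B') k l := by
    intro k l
    have h1 : (Q * B') k l = (B * Q) k l := by rw [hrel]
    simp only [hQdef, Matrix.add_mul, Matrix.mul_add, Matrix.one_mul, Matrix.mul_one,
      Matrix.add_apply] at h1
    linear_combination h1
  have hBN : ∀ k l : Fin m, (l : ℕ) ≤ (k : ℕ) + d + 1 → (B * N) k l = B k k * N k l := by
    intro k l hl
    rw [Matrix.mul_apply]
    apply Finset.sum_eq_single k
    · intro r _ hr
      by_cases hrk : (r : ℕ) < (k : ℕ)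
      · rw [hB (show id r < id k from hrk), zero_mul]
      · have hne : (r : ℕ) ≠ (k : ℕ) := fun hc => hr (Fin.ext hc)
        rw [hNtr r l (by omega), mul_zero]
    · intro h; exact absurd (Finset.mem_univ k) h
  have hNB : ∀ k l : Fin m, (N * B') k l =
      if h : (k : ℕ) + d + 1 < m then N k ⟨(k : ℕ) + d + 1, h⟩ * B' ⟨(k : ℕ) + d + 1, h⟩ l
      else 0 := by
    intro k l
    rw [Matrix.mul_apply]
    split_ifs with h
    · apply Finset.sum_eq_single (⟨(k : ℕ) + d + 1, h⟩ : Fin m)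
      · intro r _ hr
        rw [hNtr k r (fun hc => hr (Fin.ext hc)), zero_mul]
      · intro hc; exact absurd (Finset.mem_univ _) hc
    · apply Finset.sum_eq_zero
      intro r _
      rw [hNtr k r (by have := r.isLt; omega), zero_mul]
  have master : ∀ n : ℕ, ∀ k l : Fin m, m - (k : ℕ) ≤ n →
      (((l : ℕ) ≤ (k : ℕ) + d → B' k l = B k l) ∧
       ((l : ℕ) = (k : ℕ) + d + 1 → B k k ≠ B l l → B' k l = 0)) := by
    intro n
    induction n with
    | zero => intro k l hk; exfalso; have := k.isLt; omega
    | succ n ih =>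
      intro k l hk
      constructor
      · intro hl
        have hNkl : N k l = 0 := hNtr k l (by omega)
        have hNB' : (N * B') k l = 0 := by
          rw [hNB k l]
          split_ifs with h
          · have hIH := (ih ⟨(k : ℕ) + d + 1, h⟩ l (by simp; omega)).1 (by simp; omega)
            rw [hIH, hB (show id l < id (⟨(k : ℕ) + d + 1, h⟩ : Fin m) from
              Fin.lt_def.mpr (by simp; omega)), mul_zero]
          · rfl
        rw [hentry k l, hBN k l (by omega), hNkl, hNB', mul_zero]
        ring
      · intro hl hne
        have h : (k : ℕ) + d + 1 < m := by have := l.isLt; omega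
        have hlk : l = (⟨(k : ℕ) + d + 1, h⟩ : Fin m) := Fin.ext (by simp [hl])
        have hNkl : N k l = B k l / (B l l - B k k) := by
          simp only [hNdef]
          rw [if_pos ⟨hl, hne⟩]
        have hB'll : B' l l = B l l := (ih l l (by omega)).1 (by omega)
        have hNB' : (N * B') k l = N k l * B l l := by
          rw [hNB k l, dif_pos h, ← hlk, hB'll]
        have hsub : B l l - B k k ≠ 0 := sub_ne_zero.mpr (Ne.symm hne)
        rw [hentry k l, hBN k l (by omega), hNB', hNkl]
        field_simp
        ring
  exact ⟨Q, hQu, hQt, hQdiag,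
    fun k l hl => (master m k l (by omega)).1 hl,
    fun k l hl hne => (master m k l (by omega)).2 hl hne⟩

private lemma main_lemma {F : Type*} [Field F] {m : ℕ} (A : Matrix (Fin m) (Fin m) F)
    (hA : A.BlockTriangular id) (d : ℕ) :
    ∃ P : Matrix (Fin m) (Fin m) F, IsUnit P ∧ P.BlockTriangular id ∧ (∀ i, P i i = 1) ∧
      (P⁻¹ * A * P).BlockTriangular id ∧
      (∀ i, (P⁻¹ * A * P) i i = A i i) ∧
      (∀ i j : Fin m, (j : ℕ) ≤ (i : ℕ) + d → A i i ≠ A j j → (P⁻¹ * A * P) i j = 0) := by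
  induction d with
  | zero =>
    refine ⟨1, isUnit_one, Matrix.blockTriangular_one, fun i => Matrix.one_apply_eq i, ?_, ?_, ?_⟩
    · simpa [inv_one] using hA
    · simp [inv_one]
    · intro i j hj hne
      simp only [inv_one, Matrix.one_mul, Matrix.mul_one]
      rcases lt_or_eq_of_le hj with h | h
      · exact hA (show id j < id i from h)
      · exact absurd (by rw [Fin.ext h]) hne
  | succ d ih =>
    obtain ⟨P, hPu, hPt, hPd, hBt, hBd, hBz⟩ := ih
    set B := P⁻¹ * A * P with hBdef
    obtain ⟨Q, hQu, hQt, hQd, hs1, hs2⟩ := step_lemma (d := d) B hBt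
    have key : (P * Q)⁻¹ * A * (P * Q) = Q⁻¹ * B * Q := by
      rw [Matrix.mul_inv_rev, hBdef]
      simp only [Matrix.mul_assoc]
    refine ⟨P * Q, hPu.mul hQu, hPt.mul hQt, ?_, ?_, ?_, ?_⟩
    · intro i
      rw [diag_mul_tri hPt hQt, hPd, hQd, one_mul]
    · intro i j hij
      have hij' : (j : ℕ) < (i : ℕ) := hij
      rw [key, hs1 i j (by omega)]
      exact hBt hij
    · intro i
      rw [key, hs1 i i (by omega)]
      exact hBd i
    · intro i j hj hne
      rw [key]
      rcases Nat.lt_or_ge (j : ℕ) ((i : ℕ) + d + 1) with h | h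
      · rw [hs1 i j (by omega)]
        exact hBz i j (by omega) hne
      · have hj' : (j : ℕ) = (i : ℕ) + d + 1 := by omega
        exact hs2 i j hj' (by rw [hBd i, hBd j]; exact hne)

theorem stmt4 {F : Type*} [Field F] {m : ℕ} (hm : 0 < m)
    (A : Matrix (Fin m) (Fin m) F) (hA : A.BlockTriangular id) :
    ∃ P : Matrix (Fin m) (Fin m) F, IsUnit P ∧ P.BlockTriangular id ∧
      (∀ i, P i i = 1) ∧
      ∀ i j, (P⁻¹ * A * P) i i ≠ (P⁻¹ * A * P) j j → (P⁻¹ * A * P) i j = 0 := by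
  obtain ⟨P, hPu, hPt, hPd, _, hdiag, hz⟩ := main_lemma A hA m
  refine ⟨P, hPu, hPt, hPd, ?_⟩
  intro i j hne
  have hne' : A i i ≠ A j j := by rwa [hdiag i, hdiag j] at hne
  exact hz i j (by have := j.isLt; omega) hne'
end

section
/- Let F be an algebraically closed field and let A_1, ..., A_n be commuting upper triangular m×m matrices forming a uniserial family of operators on F^m. Then for each j, all diagonal entries of A_j are equal (A_j has a single eigenvalue). -/
theorem stmt6 {F : Type*} [Field F] [IsAlgClosed F] {m n : ℕ} (hm : 1 ≤ m)
    (A : Fin n → Matrix (Fin m) (Fin m) F)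
    (hcomm : ∀ i j, A i * A j = A j * A i)
    (htri : ∀ j, (A j).BlockTriangular id)
    (hT : IsUniserialFamily {f : Module.End F (Fin m → F) |
      ∃ j, f = Matrix.toLin' (A j)}) :
    ∀ j (i i' : Fin m), A j i i = A j i' i' := by
  intro j i i'
  by_contra hne
  set f : Module.End F (Fin m → F) := Matrix.toLin' (A j) with hf
  set W : F → Submodule F (Fin m → F) := fun μ => f.genEigenspace μ ⊤ with hW
  -- each generalized eigenspace is invariant under the whole family
  have hinv : ∀ μ : F, W μ ∈ {Wt : Submodule F (Fin m → F) |
      ∀ g ∈ {g : Module.End F (Fin m → F) | ∃ k, g = Matrix.toLin' (A k)},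
        Wt.map g ≤ Wt} := by
    intro μ g hg
    obtain ⟨k, rfl⟩ := hg
    have hc : Commute f (Matrix.toLin' (A k)) := by
      show _ * _ = _ * _
      rw [hf]
      simp only [Module.End.mul_eq_comp, ← Matrix.toLin'_mul, hcomm]
    rw [Submodule.map_le_iff_le_comap]
    intro x hx
    exact Module.End.mapsTo_genEigenspace_of_comm hc μ ⊤ hx
  -- a diagonal entry of a triangular matrix gives a nonzero generalized eigenspace
  have hne_bot : ∀ p : Fin m, W (A j p p) ≠ ⊥ := by
    intro p hbot
    set μ := A j p p
    have htriM : (A j - μ • (1 : Matrix (Fin m) (Fin m) F)).BlockTriangular id := by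
      apply (htri j).sub
      intro a b hab
      simp only [Matrix.smul_apply, Matrix.one_apply, smul_eq_mul]
      rw [if_neg (by exact fun h => absurd h (by rintro rfl; exact lt_irrefl _ hab))]
      ring
    have hdet : (A j - μ • (1 : Matrix (Fin m) (Fin m) F)).det = 0 := by
      rw [Matrix.det_of_upperTriangular htriM]
      apply Finset.prod_eq_zero (Finset.mem_univ p)
      simp [μ]
    obtain ⟨v, hv0, hv⟩ := (Matrix.exists_mulVec_eq_zero_iff).2 hdet
    have hvW : v ∈ W μ := by
      rw [hW]
      rw [Module.End.mem_genEigenspace]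
      refine ⟨1, le_top, ?_⟩
      rw [pow_one, LinearMap.mem_ker]
      have : (f - μ • 1) v = (A j - μ • (1 : Matrix (Fin m) (Fin m) F)).mulVec v := by
        simp [hf, Matrix.sub_mulVec, Matrix.toLin'_apply, Matrix.smul_mulVec,
          Matrix.one_mulVec]
      rw [this, hv]
    rw [hbot] at hvW
    exact hv0 (by simpa using hvW)
  -- the two generalized eigenspaces are disjoint
  have hdisj : Disjoint (W (A j i i)) (W (A j i' i')) :=
    Module.End.disjoint_genEigenspace f hne ⊤ ⊤
  -- but the chain condition forces one to contain the other
  have h1 := hinv (A j i i)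
  have h2 := hinv (A j i' i')
  rcases eq_or_ne (W (A j i i)) (W (A j i' i')) with heq | hWne
  · rw [heq] at hdisj
    exact hne_bot i' (disjoint_self.mp hdisj)
  · rcases hT h1 h2 hWne with hle | hle
    · exact hne_bot i (le_bot_iff.mp ((le_inf le_rfl hle).trans hdisj.le_bot))
    · exact hne_bot i' (le_bot_iff.mp ((le_inf hle le_rfl).trans hdisj.le_bot))
end

section
/- Let F be a field, J = J_m(0), D = diag(α, α−1, ..., α−(m−1)), and let G be the group of matrices I + f(J) where f ranges over polynomials with zero constant term. If T ∈ G and E = T D T^{-1}, then E = D + f(J) for some polynomial f with no constant term; in particular the set Y = {D + f(J) : f has no constant term} is stable under conjugation by G. -/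
/-- The m×m upper triangular Jordan block with eigenvalue α. -/
def jordanBlock {F : Type*} [Field F] (m : ℕ) (α : F) :
    Matrix (Fin m) (Fin m) F :=
  fun i j => if (i : ℕ) + 1 = (j : ℕ) then 1 else if i = j then α else 0

open Polynomial Matrix

section Aux

variable {F : Type*} [Field F] {m : ℕ}

lemma jb_apply (i j : Fin m) :
    jordanBlock m (0:F) i j = if (i : ℕ) + 1 = (j : ℕ) then 1 else 0 := by
  unfold jordanBlock
  split_ifs <;> simp

lemma jb_pow_entry_zero : ∀ (k : ℕ) (i j : Fin m), (j : ℕ) < (i : ℕ) + k →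
    ((jordanBlock m (0:F)) ^ k) i j = 0 := by
  intro k
  induction k with
  | zero =>
    intro i j h
    rw [pow_zero, Matrix.one_apply, if_neg]
    intro e; subst e; omega
  | succ k ih =>
    intro i j h
    rw [pow_succ, Matrix.mul_apply]
    apply Finset.sum_eq_zero
    intro l _
    rw [jb_apply]
    by_cases hl : (l : ℕ) + 1 = (j : ℕ)
    · rw [if_pos hl, mul_one, ih]
      omega
    · rw [if_neg hl, mul_zero]

lemma jb_pow_m : (jordanBlock m (0:F)) ^ m = 0 := by
  ext i j
  rw [jb_pow_entry_zero m i j (by omega)]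
  rfl

lemma jb_comm (α : F) :
    jordanBlock m 0 * Matrix.diagonal (fun i : Fin m => α - (i : ℕ)) =
      Matrix.diagonal (fun i : Fin m => α - (i : ℕ)) * jordanBlock m 0
        - jordanBlock m 0 := by
  ext i j
  rw [Matrix.sub_apply, Matrix.mul_diagonal, Matrix.diagonal_mul, jb_apply]
  by_cases h : (i : ℕ) + 1 = (j : ℕ)
  · rw [if_pos h]
    have : ((j : ℕ) : F) = ((i : ℕ) : F) + 1 := by
      rw [← h]; push_cast; ring
    rw [this]; ring
  · rw [if_neg h]; ring

lemma jb_pow_comm (α : F) (n : ℕ) :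
    (jordanBlock m (0:F)) ^ n * Matrix.diagonal (fun i : Fin m => α - (i : ℕ)) =
      Matrix.diagonal (fun i : Fin m => α - (i : ℕ)) * (jordanBlock m (0:F)) ^ n
        - (n : F) • (jordanBlock m (0:F)) ^ n := by
  induction n with
  | zero => simp
  | succ n ih =>
    have h1 : (jordanBlock m (0:F)) ^ (n+1) *
        Matrix.diagonal (fun i : Fin m => α - (i : ℕ)) =
        (jordanBlock m (0:F)) ^ n * (jordanBlock m (0:F) *
          Matrix.diagonal (fun i : Fin m => α - (i : ℕ))) := by
      rw [pow_succ, mul_assoc]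
    rw [h1, jb_comm, mul_sub, ← mul_assoc, ih, sub_mul, smul_mul_assoc,
      mul_assoc]
    simp only [← pow_succ]
    push_cast
    rw [add_smul, one_smul]
    abel

lemma jb_aeval_comm (α : F) (p : Polynomial F) :
    Polynomial.aeval (jordanBlock m (0:F)) p *
        Matrix.diagonal (fun i : Fin m => α - (i : ℕ)) =
      Matrix.diagonal (fun i : Fin m => α - (i : ℕ)) *
          Polynomial.aeval (jordanBlock m (0:F)) p
        - Polynomial.aeval (jordanBlock m (0:F)) (X * derivative p) := by
  induction p using Polynomial.induction_on' with
  | add p q hp hq =>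
    rw [derivative_add, mul_add, map_add, map_add, add_mul, hp, hq, mul_add]
    abel
  | monomial n a =>
    have hX : X * derivative (monomial n a) = monomial n (a * n) := by
      rw [derivative_monomial]
      cases n with
      | zero => simp
      | succ k => rw [X_mul_monomial]; norm_num
    rw [hX, aeval_monomial, aeval_monomial, Algebra.algebraMap_eq_smul_one,
      Algebra.algebraMap_eq_smul_one]
    simp only [smul_mul_assoc, one_mul]
    rw [jb_pow_comm, smul_sub, mul_smul_comm, mul_smul]

end Aux

theorem stmt9 {F : Type*} [Field F] {m : ℕ} (hm : 1 ≤ m) (α : F)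
    (f : Polynomial F) (hf : f.coeff 0 = 0) :
    letI J : Matrix (Fin m) (Fin m) F := jordanBlock m 0
    letI D : Matrix (Fin m) (Fin m) F :=
      Matrix.diagonal (fun i : Fin m => α - (i : ℕ))
    letI T : Matrix (Fin m) (Fin m) F := 1 + Polynomial.aeval J f
    ∃ g : Polynomial F, g.coeff 0 = 0 ∧
      T * D * T⁻¹ = D + Polynomial.aeval J g := by
  obtain ⟨q, hq⟩ : (X : Polynomial F) ∣ f := X_dvd_iff.mpr hf
  have hNm : Polynomial.aeval (jordanBlock m (0:F)) f ^ m = 0 := by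
    rw [← _root_.map_pow, hq, mul_pow, _root_.map_mul, _root_.map_pow, aeval_X, jb_pow_m, zero_mul]
  set s : Polynomial F := ∑ k ∈ Finset.range m, (-f) ^ k with hs
  have hgeom : (1 + f) * s = 1 - (-f) ^ m := by
    have h2 : s * (-f - 1) = (-f) ^ m - 1 := geom_sum_mul (-f) m
    linear_combination -h2
  have hTs : (1 + Polynomial.aeval (jordanBlock m (0:F)) f) *
      Polynomial.aeval (jordanBlock m (0:F)) s = 1 := by
    have hT : (1 : Matrix (Fin m) (Fin m) F) +
        Polynomial.aeval (jordanBlock m (0:F)) f =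
        Polynomial.aeval (jordanBlock m (0:F)) (1 + f) := by
      rw [map_add, _root_.map_one]
    rw [hT, ← _root_.map_mul, hgeom, map_sub, _root_.map_one, _root_.map_pow,
      map_neg, neg_pow, hNm, mul_zero, sub_zero]
  have hTinv : (1 + Polynomial.aeval (jordanBlock m (0:F)) f)⁻¹ =
      Polynomial.aeval (jordanBlock m (0:F)) s := Matrix.inv_eq_right_inv hTs
  refine ⟨-(X * derivative f * s), ?_, ?_⟩
  · simp [coeff_zero_eq_eval_zero]
  · have hTD : (1 + Polynomial.aeval (jordanBlock m (0:F)) f) *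
        Matrix.diagonal (fun i : Fin m => α - (i : ℕ)) =
        Matrix.diagonal (fun i : Fin m => α - (i : ℕ)) *
          (1 + Polynomial.aeval (jordanBlock m (0:F)) f) -
          Polynomial.aeval (jordanBlock m (0:F)) (X * derivative f) := by
      rw [add_mul, one_mul, mul_add, mul_one, jb_aeval_comm]
      abel
    show (1 + Polynomial.aeval (jordanBlock m (0:F)) f) *
        Matrix.diagonal (fun i : Fin m => α - (i : ℕ)) *
        (1 + Polynomial.aeval (jordanBlock m (0:F)) f)⁻¹ = _
    rw [hTD, hTinv, sub_mul, mul_assoc, hTs, mul_one]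
    simp only [map_neg, _root_.map_mul]
    abel
end

section
/- Let F have characteristic 0, J = J_m(0), and D = diag(α, α−1, ..., α−(m−1)). If f ∈ F[X] has zero constant term, degree < m, and (I + f(J)) commutes with D + g(J) for some polynomial g with no constant term, then f = 0. In other words, the stabilizer in G of any element D + g(J) is trivial. -/
lemma jordanBlock_zero_apply {F : Type*} [Field F] {m : ℕ} (i j : Fin m) :
    jordanBlock m (0:F) i j = if (i:ℕ) + 1 = (j:ℕ) then 1 else 0 := by
  unfold jordanBlock
  split_ifs with h1 h2 <;> simp

lemma jpow {F : Type*} [Field F] {m : ℕ} (n : ℕ) (i j : Fin m) :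
    ((jordanBlock m (0:F)) ^ n) i j = if (i:ℕ) + n = (j:ℕ) then 1 else 0 := by
  induction n generalizing j with
  | zero => simp [Matrix.one_apply, Fin.ext_iff]
  | succ n ih =>
    rw [pow_succ, Matrix.mul_apply]
    simp only [ih, jordanBlock_zero_apply]
    by_cases h : (i:ℕ) + n < m
    · rw [Finset.sum_eq_single (⟨(i:ℕ)+n, h⟩ : Fin m)]
      · simp [← add_assoc]
      · intro b _ hb
        rw [if_neg, zero_mul]
        intro hc
        exact hb (Fin.ext hc.symm)
      · simp
    · rw [Finset.sum_eq_zero, if_neg]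
      · omega
      · intro b _
        rw [if_neg, zero_mul]
        intro hc
        omega

lemma aeval_jordan_entry {F : Type*} [Field F] {m : ℕ} (f : Polynomial F)
    (hdeg : f.natDegree < m) (i j : Fin m) (h : (i:ℕ) ≤ (j:ℕ)) :
    (Polynomial.aeval (jordanBlock m (0:F)) f) i j = f.coeff ((j:ℕ) - (i:ℕ)) := by
  rw [Polynomial.aeval_eq_sum_range' hdeg]
  rw [Matrix.sum_apply]
  simp only [Matrix.smul_apply, jpow, smul_eq_mul, mul_ite, mul_one, mul_zero]
  rw [Finset.sum_eq_single ((j:ℕ) - (i:ℕ))]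
  · rw [if_pos (by omega)]
  · intro b _ hb; rw [if_neg (by omega)]
  · intro hb; simp at hb; omega

theorem stmt10 {F : Type*} [Field F] [CharZero F] {m : ℕ} (hm : 1 ≤ m) (α : F)
    (f g : Polynomial F) (hf0 : f.coeff 0 = 0) (hfdeg : f.degree < m)
    (hg0 : g.coeff 0 = 0)
    (hcomm :
      letI J : Matrix (Fin m) (Fin m) F := jordanBlock m 0
      letI D : Matrix (Fin m) (Fin m) F :=
        Matrix.diagonal (fun i : Fin m => α - (i : ℕ))
      (1 + Polynomial.aeval J f) * (D + Polynomial.aeval J g) =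
        (D + Polynomial.aeval J g) * (1 + Polynomial.aeval J f)) :
    f = 0 := by
  by_cases hf : f = 0
  · exact hf
  have hnd : f.natDegree < m := by
    rwa [Polynomial.natDegree_lt_iff_degree_lt hf]
  set J : Matrix (Fin m) (Fin m) F := jordanBlock m 0 with hJ
  set D : Matrix (Fin m) (Fin m) F :=
    Matrix.diagonal (fun i : Fin m => α - (i : ℕ)) with hD
  set A : Matrix (Fin m) (Fin m) F := Polynomial.aeval J f with hA
  set B : Matrix (Fin m) (Fin m) F := Polynomial.aeval J g with hB
  have hAB : A * B = B * A := by
    rw [hA, hB, ← map_mul, ← map_mul, mul_comm]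
  have hexp : (1 + A) * (D + B) - (D + B) * (1 + A)
      = (A * D - D * A) + (A * B - B * A) := by noncomm_ring
  have hFD : A * D = D * A := by
    have h0 : (1 + A) * (D + B) - (D + B) * (1 + A) = 0 := by
      rw [hcomm]; simp
    rw [hexp, hAB, sub_self, add_zero, sub_eq_zero] at h0
    exact h0
  -- extract coefficients
  apply Polynomial.ext
  intro n
  rcases Nat.eq_zero_or_pos n with hn | hn
  · simpa [hn] using hf0
  by_cases hnm : n < m
  · -- use entry (0, n)
    have h0m : (0:ℕ) < m := hm
    have hij := congrFun (congrFun hFD ⟨0, h0m⟩) ⟨n, hnm⟩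
    rw [hD, Matrix.mul_diagonal, Matrix.diagonal_mul] at hij
    rw [hA, aeval_jordan_entry f hnd _ _ (by simp)] at hij
    simp only [Polynomial.coeff_zero]
    have hcast : ((⟨n, hnm⟩ : Fin m) : ℕ) = n := rfl
    rw [hcast] at hij
    simp only [Nat.sub_zero, Nat.cast_zero, sub_zero] at hij
    have : f.coeff n * (n : F) = 0 := by linear_combination -hij
    rcases mul_eq_zero.mp this with h | h
    · exact h
    · exact absurd h (Nat.cast_ne_zero.mpr (by omega))
  · exact Polynomial.coeff_eq_zero_of_degree_lt
      (lt_of_lt_of_le hfdeg (by exact_mod_cast Nat.le_of_not_lt hnm))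
end

section
/- Let F have prime characteristic p, J = J_m(0), and D = diag(α, α−1, ..., α−(m−1)). The stabilizer of D in the group G = {I + f(J) : f(0)=0} under conjugation consists exactly of the matrices I + h(J^p) where h ∈ F[X] has no constant term. In particular, if p ≥ m this stabilizer is trivial. -/
lemma jordan_pow {F : Type*} [Field F] {m : ℕ} (k : ℕ) (i j : Fin m) :
    ((jordanBlock m (0:F)) ^ k) i j = if (i : ℕ) + k = (j : ℕ) then 1 else 0 := by
  induction k generalizing j with
  | zero =>
    simp only [pow_zero, Matrix.one_apply, Nat.add_zero]
    congr 1
    simp [Fin.ext_iff]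
  | succ k ih =>
    rw [pow_succ, Matrix.mul_apply]
    rcases lt_or_ge ((i : ℕ) + k) m with hlt | hle
    · rw [Finset.sum_eq_single (⟨(i : ℕ) + k, hlt⟩ : Fin m)]
      · rw [ih, if_pos rfl, one_mul]
        simp only [jordanBlock, Fin.val_mk]
        by_cases h : (i : ℕ) + k + 1 = (j : ℕ)
        · rw [if_pos h, if_pos (show (i : ℕ) + (k+1) = (j : ℕ) by omega)]
        · rw [if_neg h, if_neg (show ¬((i : ℕ) + (k+1) = (j : ℕ)) by omega)]
          split <;> rfl
      · intro b _ hb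
        rw [ih, if_neg (by simpa [Fin.ext_iff] using fun h => hb (Fin.ext h.symm)), zero_mul]
      · intro habs; exact absurd (Finset.mem_univ _) habs
    · rw [Finset.sum_eq_zero, eq_comm, if_neg (by omega)]
      intro b _
      rw [ih, if_neg (by omega), zero_mul]

lemma aeval_jordan {F : Type*} [Field F] {m : ℕ} (f : Polynomial F) (i j : Fin m) :
    (Polynomial.aeval (jordanBlock m (0:F)) f) i j =
      if (i : ℕ) ≤ (j : ℕ) then f.coeff ((j : ℕ) - (i : ℕ)) else 0 := by
  rw [Polynomial.aeval_eq_sum_range]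
  rw [Matrix.sum_apply]
  simp only [Matrix.smul_apply, jordan_pow, smul_eq_mul]
  rcases le_or_gt (i : ℕ) (j : ℕ) with hij | hij
  · rw [if_pos hij]
    rcases lt_or_ge ((j : ℕ) - (i : ℕ)) (f.natDegree + 1) with hd | hd
    · rw [Finset.sum_eq_single ((j : ℕ) - (i : ℕ))]
      · rw [if_pos (by omega), mul_one]
      · intro b _ hb
        rw [if_neg (by omega), mul_zero]
      · intro habs
        simp only [Finset.mem_range] at habs; omega
    · rw [Polynomial.coeff_eq_zero_of_natDegree_lt (by omega)]
      apply Finset.sum_eq_zero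
      intro b hb
      simp only [Finset.mem_range] at hb
      rw [if_neg (by omega), mul_zero]
  · rw [if_neg (by omega)]
    apply Finset.sum_eq_zero
    intro b _
    rw [if_neg (by omega), mul_zero]

lemma commute_diag_iff {F : Type*} [Field F] {m : ℕ} (T : Matrix (Fin m) (Fin m) F) (α : F) :
    T * Matrix.diagonal (fun i : Fin m => α - (i : ℕ)) =
      Matrix.diagonal (fun i : Fin m => α - (i : ℕ)) * T ↔
    ∀ i j : Fin m, (((j : ℕ) : F) - ((i : ℕ) : F)) * T i j = 0 := by
  rw [← Matrix.ext_iff]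
  constructor
  · intro h i j
    have := h i j
    rw [Matrix.mul_diagonal, Matrix.diagonal_mul] at this
    linear_combination -this
  · intro h i j
    rw [Matrix.mul_diagonal, Matrix.diagonal_mul]
    linear_combination -(h i j)

theorem stmt11 {F : Type*} [Field F] {p : ℕ} [Fact p.Prime] [CharP F p]
    {m : ℕ} (hm : 1 ≤ m) (α : F) :
    letI J : Matrix (Fin m) (Fin m) F := jordanBlock m 0
    letI D : Matrix (Fin m) (Fin m) F :=
      Matrix.diagonal (fun i : Fin m => α - (i : ℕ))
    ({T : Matrix (Fin m) (Fin m) F | ∃ f : Polynomial F, f.coeff 0 = 0 ∧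
        T = 1 + Polynomial.aeval J f ∧ T * D = D * T} =
      {T : Matrix (Fin m) (Fin m) F | ∃ h : Polynomial F, h.coeff 0 = 0 ∧
        T = 1 + Polynomial.aeval (J ^ p) h}) ∧
    (p ≥ m →
      {T : Matrix (Fin m) (Fin m) F | ∃ f : Polynomial F, f.coeff 0 = 0 ∧
        T = 1 + Polynomial.aeval J f ∧ T * D = D * T} = {1}) := by
  have hp0 : 0 < p := (Fact.out : p.Prime).pos
  have hmain :
      {T : Matrix (Fin m) (Fin m) F | ∃ f : Polynomial F, f.coeff 0 = 0 ∧
        T = 1 + Polynomial.aeval (jordanBlock m (0:F)) f ∧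
        T * Matrix.diagonal (fun i : Fin m => α - (i : ℕ)) =
          Matrix.diagonal (fun i : Fin m => α - (i : ℕ)) * T} =
      {T : Matrix (Fin m) (Fin m) F | ∃ h : Polynomial F, h.coeff 0 = 0 ∧
        T = 1 + Polynomial.aeval ((jordanBlock m (0:F)) ^ p) h} := by
    ext T
    simp only [Set.mem_setOf_eq]
    constructor
    · rintro ⟨f, hf0, hT, hcomm⟩
      -- coefficients not divisible by p vanish (in degrees < m)
      have key : ∀ k : ℕ, 0 < k → k < m → ¬ p ∣ k → f.coeff k = 0 := by
        intro k hk hkm hpk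
        have hc := (commute_diag_iff T α).mp hcomm ⟨0, by omega⟩ ⟨k, hkm⟩
        rw [hT] at hc
        simp only [Matrix.add_apply, Matrix.one_apply, aeval_jordan] at hc
        rw [if_neg (by simp [Fin.ext_iff]; omega), if_pos (by simp), zero_add] at hc
        simp only [Fin.val_mk, Nat.cast_zero, sub_zero, Nat.sub_zero] at hc
        have hk0 : ((k : ℕ) : F) ≠ 0 := by
          rw [Ne, CharP.cast_eq_zero_iff F p]
          exact hpk
        exact (mul_eq_zero.mp hc).resolve_left hk0
      refine ⟨Polynomial.contract p f, ?_, ?_⟩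
      · rw [Polynomial.coeff_contract hp0.ne', zero_mul]
        exact hf0
      · rw [hT]
        congr 1
        rw [← Polynomial.expand_aeval]
        apply Matrix.ext
        intro i j
        rw [aeval_jordan, aeval_jordan]
        by_cases hle : (i : ℕ) ≤ (j : ℕ)
        · rw [if_pos hle, if_pos hle, Polynomial.coeff_expand hp0,
            Polynomial.coeff_contract hp0.ne']
          rcases Nat.eq_zero_or_pos ((j : ℕ) - (i : ℕ)) with hd | hd
          · rw [hd]
            simp [hf0]
          · by_cases hdvd : p ∣ ((j : ℕ) - (i : ℕ))
            · rw [if_pos hdvd, Nat.div_mul_cancel hdvd]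
            · rw [if_neg hdvd]
              exact key _ hd (by omega) hdvd
        · rw [if_neg hle, if_neg hle]
    · rintro ⟨h, hh0, hT⟩
      refine ⟨Polynomial.expand F p h, ?_, ?_, ?_⟩
      · rw [Polynomial.coeff_expand hp0, if_pos (dvd_zero p), Nat.zero_div]
        exact hh0
      · rw [hT, Polynomial.expand_aeval]
      · rw [commute_diag_iff T α]
        intro i j
        rw [hT]
        rw [Matrix.add_apply]
        rcases eq_or_ne i j with rfl | hij
        · rw [sub_self, zero_mul]
        · rw [Matrix.one_apply_ne hij, zero_add, ← Polynomial.expand_aeval, aeval_jordan]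
          by_cases hle : (i : ℕ) ≤ (j : ℕ)
          · rw [if_pos hle, Polynomial.coeff_expand hp0]
            by_cases hdvd : p ∣ ((j : ℕ) - (i : ℕ))
            · rw [if_pos hdvd]
              have : (((j : ℕ) : F) - ((i : ℕ) : F)) = 0 := by
                rw [← Nat.cast_sub hle, CharP.cast_eq_zero_iff F p]
                exact hdvd
              rw [this, zero_mul]
            · rw [if_neg hdvd, mul_zero]
          · rw [if_neg hle, mul_zero]
  refine ⟨hmain, ?_⟩
  intro hpm
  rw [hmain]
  have hJm : (jordanBlock m (0:F)) ^ m = 0 := by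
    apply Matrix.ext
    intro i j
    rw [jordan_pow]
    rw [if_neg (by omega)]
    rfl
  have hJp : (jordanBlock m (0:F)) ^ p = 0 := by
    calc (jordanBlock m (0:F)) ^ p = (jordanBlock m (0:F)) ^ m * (jordanBlock m (0:F)) ^ (p - m) := by rw [← pow_add, Nat.add_sub_cancel' hpm]
    _ = 0 := by rw [hJm, zero_mul]
  ext T
  simp only [Set.mem_setOf_eq, Set.mem_singleton_iff]
  constructor
  · rintro ⟨h, hh0, hT⟩
    rw [hT, hJp]
    have : Polynomial.aeval (0 : Matrix (Fin m) (Fin m) F) h = 0 := by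
      rw [Polynomial.aeval_def, Polynomial.eval₂_at_zero, hh0, map_zero]
    rw [this, add_zero]
  · rintro rfl
    refine ⟨0, by simp, by simp⟩
end

section
/- Let F have characteristic 0 or p ≥ m, m > 1, and let g = ⟨x⟩ ⋉ a with a abelian and ad x diagonalizable on a. Suppose 1 is an eigenvalue of ad x on a with eigenvector v, and let α ∈ F and linear functionals f^i : a(i) → F for 0 ≤ i < m with f^1(v) = 1, where a(δ) is the δ-eigenspace of ad x. Then the linear map R : g → gl(m,F) given by R(x) = D = diag(α, α−1, ..., α−(m−1)), R(u) = f^i(u) J^i for u ∈ a(i) (0 ≤ i < m), and R(u) = 0 for u ∈ a(δ) with δ ∉ {0, 1, ..., m−1}, is a Lie algebra homomorphism, and the resulting g-module F^m is uniserial of composition length m, with [g,g] acting by nonzero nilpotent operators. -/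
namespace Stmt19Aux

variable {F : Type*} [Field F] {m : ℕ}

local notation "J" => jordanBlock m (0:F)

lemma entry_one (i j : Fin m) : (J : Matrix (Fin m) (Fin m) F) i j
    = if (i:ℕ) + 1 = (j:ℕ) then 1 else 0 := by
  unfold jordanBlock
  split_ifs with h1 h2 <;> simp_all

lemma pow_entry (k : ℕ) (i j : Fin m) :
    ((J : Matrix (Fin m) (Fin m) F) ^ k) i j = if (i:ℕ) + k = (j:ℕ) then 1 else 0 := by
  induction k generalizing i j with
  | zero =>
    simp [Matrix.one_apply, Fin.ext_iff]
  | succ k ih =>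
    rw [pow_succ, Matrix.mul_apply]
    rcases Nat.lt_or_ge ((i:ℕ) + k) m with h | h
    · rw [Finset.sum_eq_single (⟨(i:ℕ)+k, h⟩ : Fin m)]
      · rw [ih, entry_one]
        simp only [if_pos rfl, one_mul]
        simp [Nat.add_assoc]
      · intro b _ hb
        rw [ih]
        rw [if_neg]
        · simp
        · intro hc; exact hb (by simp [Fin.ext_iff, ← hc])
      · simp
    · rw [Finset.sum_eq_zero]
      · rw [if_neg]
        omega
      · intro b _
        rw [ih, if_neg (by omega)]
        simp

lemma pow_m_eq_zero : ((J : Matrix (Fin m) (Fin m) F)) ^ m = 0 := by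
  ext i j
  rw [pow_entry]
  simp only [Matrix.zero_apply]
  rw [if_neg]
  omega

lemma D_comm (α : F) (k : ℕ) :
    Matrix.diagonal (fun i : Fin m => α - (i : ℕ)) * (J : Matrix (Fin m) (Fin m) F) ^ k
      - (J : Matrix (Fin m) (Fin m) F) ^ k * Matrix.diagonal (fun i : Fin m => α - (i : ℕ))
      = (k : F) • (J : Matrix (Fin m) (Fin m) F) ^ k := by
  ext i j
  rw [Matrix.sub_apply, Matrix.diagonal_mul, Matrix.mul_diagonal, Matrix.smul_apply,
    pow_entry]
  by_cases h : (i:ℕ) + k = (j:ℕ)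
  · simp only [if_pos h]
    have : ((j:ℕ) : F) = ((i:ℕ) : F) + (k : F) := by
      rw [← h]; push_cast; ring
    simp only [mul_one, one_mul, smul_eq_mul, this]
    ring
  · simp only [if_neg h]
    simp

lemma pow_mulVec (s : ℕ) (f : Fin m → F) (j : Fin m) :
    (((J : Matrix (Fin m) (Fin m) F) ^ s).mulVec f) j
      = if h : (j:ℕ) + s < m then f ⟨(j:ℕ)+s, h⟩ else 0 := by
  rw [Matrix.mulVec, dotProduct]
  split_ifs with h
  · rw [Finset.sum_eq_single (⟨(j:ℕ)+s, h⟩ : Fin m)]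
    · rw [pow_entry, if_pos rfl, one_mul]
    · intro b _ hb
      rw [pow_entry, if_neg, zero_mul]
      intro hc; exact hb (by simp [Fin.ext_iff, ← hc])
    · simp
  · apply Finset.sum_eq_zero
    intro b _
    rw [pow_entry, if_neg (by omega), zero_mul]

/-- The flag of coordinate subspaces. -/
def flag (F : Type*) [Field F] (m : ℕ) (k : ℕ) : Submodule F (Fin m → F) where
  carrier := {f | ∀ j : Fin m, k ≤ (j:ℕ) → f j = 0}
  add_mem' := by intro f g hf hg j hj; simp [hf j hj, hg j hj]
  zero_mem' := by intro j hj; rfl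
  smul_mem' := by intro c f hf j hj; simp [hf j hj]

lemma mem_flag {k : ℕ} {f : Fin m → F} :
    f ∈ flag F m k ↔ ∀ j : Fin m, k ≤ (j:ℕ) → f j = 0 := Iff.rfl

lemma flag_mono {k k' : ℕ} (h : k ≤ k') : flag F m k ≤ flag F m k' := by
  intro f hf j hj
  exact hf j (h.trans hj)

lemma flag_top : flag F m m = ⊤ := by
  ext f
  simp only [Submodule.mem_top, iff_true, mem_flag]
  intro j hj
  exact absurd j.isLt (by omega)

lemma single_mem_flag {t : ℕ} (ht : t < m) {k : ℕ} (htk : t < k) :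
    Pi.single (⟨t, ht⟩ : Fin m) (1:F) ∈ flag F m k := by
  intro j hj
  apply Pi.single_eq_of_ne
  intro hc
  rw [hc] at hj
  simp at hj
  omega

lemma single_not_mem_flag {t : ℕ} (ht : t < m) :
    Pi.single (⟨t, ht⟩ : Fin m) (1:F) ∉ flag F m t := by
  intro h
  have := h ⟨t, ht⟩ (by simp)
  simp at this

/-- A matrix is upper triangular in the weak sense. -/
def UT (M : Matrix (Fin m) (Fin m) F) : Prop := ∀ i j : Fin m, (j:ℕ) < (i:ℕ) → M i j = 0

lemma UT_preserves_flag {M : Matrix (Fin m) (Fin m) F} (hM : UT M) (k : ℕ)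
    {f : Fin m → F} (hf : f ∈ flag F m k) : M.mulVec f ∈ flag F m k := by
  intro j hj
  rw [Matrix.mulVec, dotProduct]
  apply Finset.sum_eq_zero
  intro b _
  rcases Nat.lt_or_ge (b:ℕ) k with h | h
  · rw [hM j b (by omega), zero_mul]
  · rw [hf b h, mul_zero]

lemma UT_pow (k : ℕ) : UT ((J : Matrix (Fin m) (Fin m) F) ^ k) := by
  intro i j hij
  rw [pow_entry, if_neg (by omega)]

lemma UT_D (α : F) : UT (Matrix.diagonal (fun i : Fin m => α - (i : ℕ))) := by
  intro i j hij
  rw [Matrix.diagonal_apply_ne]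
  intro hc; rw [hc] at hij; omega

lemma UT_add {M N : Matrix (Fin m) (Fin m) F} (hM : UT M) (hN : UT N) : UT (M + N) := by
  intro i j h; rw [Matrix.add_apply, hM i j h, hN i j h, add_zero]

lemma UT_smul (c : F) {M : Matrix (Fin m) (Fin m) F} (hM : UT M) : UT (c • M) := by
  intro i j h; rw [Matrix.smul_apply, hM i j h, smul_zero]

lemma UT_zero : UT (0 : Matrix (Fin m) (Fin m) F) := fun _ _ _ => rfl

end Stmt19Aux

namespace Stmt19Aux
variable {F : Type*} [Field F] {m : ℕ}
local notation "J" => jordanBlock m (0:F)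

lemma inv_eq_flag (W : Submodule F (Fin m → F))
    (hW : ∀ f ∈ W, (J : Matrix (Fin m) (Fin m) F).mulVec f ∈ W) :
    ∃ k, k ≤ m ∧ W = flag F m k := by
  classical
  have hWpow : ∀ (s : ℕ), ∀ g ∈ W, ((J : Matrix (Fin m) (Fin m) F) ^ s).mulVec g ∈ W := by
    intro s
    induction s with
    | zero => intro g hg; simpa using hg
    | succ s ih =>
      intro g hg
      rw [pow_succ', ← Matrix.mulVec_mulVec]
      exact hW _ (ih g hg)
  have hWtop : W ≤ flag F m m := by rw [flag_top]; exact le_top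
  have hex : ∃ n, W ≤ flag F m n := ⟨m, hWtop⟩
  refine ⟨Nat.find hex, Nat.find_min' hex hWtop, le_antisymm (Nat.find_spec hex) ?_⟩
  set k := Nat.find hex with hkdef
  rcases Nat.eq_zero_or_pos k with hk0 | hkpos
  · rw [hk0]
    intro w hw
    have : w = 0 := funext fun j => hw j (Nat.zero_le _)
    rw [this]; exact zero_mem _
  · -- find f ∈ W with f (k-1) ≠ 0
    have hmin : ¬ W ≤ flag F m (k - 1) := Nat.find_min hex (by omega)
    rw [SetLike.le_def] at hmin
    push_neg at hmin
    obtain ⟨f, hfW, hfn⟩ := hmin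
    rw [mem_flag] at hfn
    push_neg at hfn
    obtain ⟨j0, hj0, hfj0⟩ := hfn
    have hfk : f ∈ flag F m k := Nat.find_spec hex hfW
    have hj0k : (j0 : ℕ) = k - 1 := by
      by_contra hc
      exact hfj0 (hfk j0 (by omega))
    have hkm : k ≤ m := Nat.find_min' hex hWtop
    have hk1m : k - 1 < m := by have := j0.isLt; omega
    -- main induction
    have claim : ∀ t, t ≤ k → flag F m t ≤ W := by
      intro t
      induction t with
      | zero =>
        intro _ w hw
        have : w = 0 := funext fun j => hw j (Nat.zero_le _)
        rw [this]; exact zero_mem _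
      | succ t ih =>
        intro htk
        have hflag_t := ih (by omega)
        set g := ((J : Matrix (Fin m) (Fin m) F) ^ (k - 1 - t)).mulVec f with hgdef
        have hgW : g ∈ W := hWpow _ f hfW
        have htm : t < m := by omega
        have hgt : g ⟨t, htm⟩ ≠ 0 := by
          rw [hgdef, pow_mulVec, dif_pos (by simpa using by omega : (⟨t, htm⟩ : Fin m).val + (k - 1 - t) < m)]
          have : (⟨(⟨t, htm⟩ : Fin m).val + (k - 1 - t), by simpa using by omega⟩ : Fin m) = j0 := by
            apply Fin.ext; simp; omega
          rw [this]; exact hfj0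
        have hgzero : ∀ j : Fin m, t < (j:ℕ) → g j = 0 := by
          intro j hj
          rw [hgdef, pow_mulVec]
          split_ifs with h
          · exact hfk _ (by simp; omega)
          · rfl
        intro w hw
        have hw' : w - (w ⟨t, htm⟩ / g ⟨t, htm⟩) • g ∈ flag F m t := by
          intro j hj
          rcases eq_or_lt_of_le hj with hj' | hj'
          · have hje : j = ⟨t, htm⟩ := Fin.ext hj'.symm
            subst hje
            simp only [Pi.sub_apply, Pi.smul_apply, smul_eq_mul]
            field_simp
            simp
          · simp only [Pi.sub_apply, Pi.smul_apply, smul_eq_mul,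
              hw j (by omega), hgzero j hj', mul_zero, sub_zero]
        have : w = (w - (w ⟨t, htm⟩ / g ⟨t, htm⟩) • g) + (w ⟨t, htm⟩ / g ⟨t, htm⟩) • g := by
          abel
        rw [this]
        exact add_mem (hflag_t hw') (Submodule.smul_mem _ _ hgW)
    exact claim k le_rfl

end Stmt19Aux
theorem stmt19 {F L : Type*} [Field F] [IsAlgClosed F]
    [LieRing L] [LieAlgebra F L] [Module.Finite F L]
    {m : ℕ} (hm : 1 < m)
    (hchar : ringChar F = 0 ∨ ((ringChar F).Prime ∧ m ≤ ringChar F))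
    (x : L) (a : LieIdeal F L)
    (habel : ∀ y ∈ a, ∀ z ∈ a, ⁅y, z⁆ = (0 : L))
    (hspan : Submodule.span F {x} ⊔ (a : Submodule F L) = ⊤)
    (α : F) (v : L) (fi : ℕ → (L →ₗ[F] F))
    (R : L →ₗ[F] Matrix (Fin m) (Fin m) F) :
    letI J : Matrix (Fin m) (Fin m) F := jordanBlock m 0
    letI D : Matrix (Fin m) (Fin m) F :=
      Matrix.diagonal (fun i : Fin m => α - (i : ℕ))
    letI aδ : F → Submodule F L := fun δ =>
      (a : Submodule F L) ⊓
        Module.End.eigenspace ((LieAlgebra.ad F L x) : L →ₗ[F] L) δ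
    -- ad x acts diagonalizably on a
    (⨆ δ : F, aδ δ) = (a : Submodule F L) →
    -- v is an eigenvector of ad x with eigenvalue 1, and f^1(v) = 1
    v ≠ 0 → v ∈ aδ 1 → fi 1 v = 1 →
    -- the defining equations for R
    R x = D →
    (∀ i : ℕ, i < m → ∀ u ∈ aδ (i : F), R u = fi i u • J ^ i) →
    (∀ δ : F, (∀ i : ℕ, i < m → (i : F) ≠ δ) → ∀ u ∈ aδ δ, R u = 0) →
    -- conclusions
    ((∀ y z : L, R ⁅y, z⁆ = R y * R z - R z * R y) ∧
      IsChain (· ≤ ·) {W : Submodule F (Fin m → F) |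
        ∀ y : L, W.map (Matrix.toLin' (R y)) ≤ W} ∧
      {W : Submodule F (Fin m → F) |
        ∀ y : L, W.map (Matrix.toLin' (R y)) ≤ W}.ncard = m + 1 ∧
      (∀ y ∈ ⁅(⊤ : LieIdeal F L), (⊤ : LieIdeal F L)⁆, IsNilpotent (R y)) ∧
      (∃ y ∈ ⁅(⊤ : LieIdeal F L), (⊤ : LieIdeal F L)⁆, R y ≠ 0)) := by
  intro hsup hv0 hv1 hfv hRx hRi hR0
  classical
  set J : Matrix (Fin m) (Fin m) F := jordanBlock m 0 with hJ
  set D : Matrix (Fin m) (Fin m) F :=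
    Matrix.diagonal (fun i : Fin m => α - (i : ℕ)) with hD
  set aδ : F → Submodule F L := fun δ =>
    (a : Submodule F L) ⊓
      Module.End.eigenspace ((LieAlgebra.ad F L x) : L →ₗ[F] L) δ with haδ

  have hm0 : 0 < m := by omega
  -- eigenvector bracket formula
  have hbr : ∀ δ : F, ∀ u ∈ aδ δ, ⁅x, u⁆ = δ • u := by
    intro δ u hu
    have h2 : (LieAlgebra.ad F L x) u = δ • u :=
      Module.End.mem_eigenspace_iff.mp (Submodule.mem_inf.mp hu).2
    simpa [LieAlgebra.ad_apply] using h2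
  -- induction principle for a
  have hind : ∀ (p : L → Prop), p 0 → (∀ y z, p y → p z → p (y + z)) →
      (∀ δ : F, ∀ u ∈ aδ δ, p u) → ∀ u ∈ (a : Submodule F L), p u := by
    intro p h0 hadd hmem u hu
    rw [← hsup] at hu
    exact Submodule.iSup_induction (motive := p) aδ hu hmem h0 hadd
  -- case analysis for R on eigenvectors
  have hcase : ∀ δ : F, ∀ u ∈ aδ δ,
      R u = 0 ∨ ∃ i : ℕ, i < m ∧ (i : F) = δ ∧ R u = fi i u • J ^ i := by
    intro δ u hu
    by_cases h : ∃ i : ℕ, i < m ∧ (i : F) = δ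
    · obtain ⟨i, him, hiδ⟩ := h
      exact Or.inr ⟨i, him, hiδ, hRi i him u (hiδ ▸ hu)⟩
    · push_neg at h
      exact Or.inl (hR0 δ (fun i hi => h i hi) u hu)
  -- R u is upper triangular for u ∈ a
  have hUTa : ∀ u ∈ (a : Submodule F L), Stmt19Aux.UT (R u) := by
    refine hind _ ?_ ?_ ?_
    · rw [map_zero]; exact Stmt19Aux.UT_zero
    · intro y z hy hz; rw [map_add]; exact Stmt19Aux.UT_add hy hz
    · intro δ u hu
      rcases hcase δ u hu with h | ⟨i, _, _, h⟩ <;> rw [h]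
      · exact Stmt19Aux.UT_zero
      · exact Stmt19Aux.UT_smul _ (Stmt19Aux.UT_pow i)
  -- commuting with powers of J
  have hcomm1 : ∀ u ∈ (a : Submodule F L), ∀ k : ℕ, Commute (J ^ k) (R u) := by
    refine hind _ ?_ ?_ ?_
    · intro k; rw [map_zero]; exact Commute.zero_right _
    · intro y z hy hz k; rw [map_add]; exact (hy k).add_right (hz k)
    · intro δ u hu k
      rcases hcase δ u hu with h | ⟨i, _, _, h⟩ <;> rw [h]
      · exact Commute.zero_right _
      · exact ((Commute.refl J).pow_pow k i).smul_right _
  have hcomm : ∀ u ∈ (a : Submodule F L), ∀ w ∈ (a : Submodule F L),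
      Commute (R u) (R w) := by
    intro u hu
    refine hind _ ?_ ?_ ?_
    · rw [map_zero]; exact Commute.zero_right _
    · intro y z hy hz; rw [map_add]; exact hy.add_right hz
    · intro δ w hw
      rcases hcase δ w hw with h | ⟨i, _, _, h⟩ <;> rw [h]
      · exact Commute.zero_right _
      · exact ((hcomm1 u hu i).symm).smul_right _
  -- R ⁅x, u⁆ = [D, R u]
  have hcross : ∀ u ∈ (a : Submodule F L), R ⁅x, u⁆ = D * R u - R u * D := by
    refine hind _ ?_ ?_ ?_
    · rw [lie_zero, map_zero]; simp
    · intro y z hy hz; rw [lie_add, map_add, map_add, hy, hz]; noncomm_ring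
    · intro δ u hu
      have h1 : R ⁅x, u⁆ = δ • R u := by rw [hbr δ u hu, map_smul]
      rcases hcase δ u hu with h | ⟨i, him, hiδ, h⟩
      · rw [h1, h]; simp
      · rw [h1, h, ← hiδ, mul_smul_comm, smul_mul_assoc, ← smul_sub,
          Stmt19Aux.D_comm α i, smul_comm]
  -- decomposition of elements of L
  have hdec : ∀ y : L, ∃ c : F, ∃ u, u ∈ (a : Submodule F L) ∧ y = c • x + u := by
    intro y
    have hy : y ∈ Submodule.span F {x} ⊔ (a : Submodule F L) := by
      rw [hspan]; trivial
    obtain ⟨p, hp, q, hq, hpq⟩ := Submodule.mem_sup.mp hy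
    obtain ⟨c, rfl⟩ := Submodule.mem_span_singleton.mp hp
    exact ⟨c, q, hq, hpq.symm⟩
  -- bracket expansion
  have hbex : ∀ (c c' : F) (u w : L), u ∈ (a : Submodule F L) →
      w ∈ (a : Submodule F L) →
      ⁅c • x + u, c' • x + w⁆ = c • ⁅x, w⁆ - c' • ⁅x, u⁆ := by
    intro c c' u w hu hw
    have h1 : ⁅u, w⁆ = 0 := habel u hu w hw
    have h2 : ⁅u, x⁆ = -⁅x, u⁆ := by rw [← lie_skew]
    simp only [add_lie, lie_add, smul_lie, lie_smul, lie_self, smul_zero,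
      zero_add, add_zero, h1, h2, smul_neg]
    abel
  -- 1. homomorphism property
  have hhom : ∀ y z : L, R ⁅y, z⁆ = R y * R z - R z * R y := by
    intro y z
    obtain ⟨c, u, hu, rfl⟩ := hdec y
    obtain ⟨c', w, hw, rfl⟩ := hdec z
    rw [hbex c c' u w hu hw, map_sub, map_smul, map_smul, hcross u hu,
      hcross w hw, map_add, map_add, map_smul, map_smul, hRx]
    have hc : R u * R w = R w * R u := hcomm u hu w hw
    simp only [add_mul, mul_add, smul_mul_assoc, mul_smul_comm, smul_smul,
      smul_sub, smul_add]
    rw [hc, mul_comm c' c]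
    abel
  -- UT for all R y
  have hUTall : ∀ y : L, Stmt19Aux.UT (R y) := by
    intro y
    obtain ⟨c, u, hu, rfl⟩ := hdec y
    rw [map_add, map_smul, hRx]
    exact Stmt19Aux.UT_add (Stmt19Aux.UT_smul _ (Stmt19Aux.UT_D α)) (hUTa u hu)
  set S := {W : Submodule F (Fin m → F) |
      ∀ y : L, W.map (Matrix.toLin' (R y)) ≤ W} with hSdef
  have hflagS : ∀ k, Stmt19Aux.flag F m k ∈ S := by
    intro k y
    rintro _ ⟨f, hf, rfl⟩
    rw [Matrix.toLin'_apply]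
    exact Stmt19Aux.UT_preserves_flag (hUTall y) k hf
  have hRv : R v = J := by
    have h1 : v ∈ aδ ((1 : ℕ) : F) := by rw [Nat.cast_one]; exact hv1
    rw [hRi 1 hm v h1, pow_one, hfv, one_smul]
  have hSflag : ∀ W ∈ S, ∃ k, k ≤ m ∧ W = Stmt19Aux.flag F m k := by
    intro W hW
    apply Stmt19Aux.inv_eq_flag
    intro f hf
    have h2 := hW v (Submodule.mem_map_of_mem hf)
    rwa [Matrix.toLin'_apply, hRv] at h2
  have hchain : IsChain (· ≤ ·) S := by
    rintro W1 hW1 W2 hW2 _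
    obtain ⟨k1, _, rfl⟩ := hSflag W1 hW1
    obtain ⟨k2, _, rfl⟩ := hSflag W2 hW2
    rcases le_total k1 k2 with h | h
    · exact Or.inl (Stmt19Aux.flag_mono h)
    · exact Or.inr (Stmt19Aux.flag_mono h)
  have hSeq : S = (fun k => Stmt19Aux.flag F m k) '' (Set.Iic m) := by
    ext W
    constructor
    · intro hW
      obtain ⟨k, hk, rfl⟩ := hSflag W hW
      exact ⟨k, hk, rfl⟩
    · rintro ⟨k, hk, rfl⟩
      exact hflagS k
  have hkey : ∀ k1 k2 : ℕ, k2 ≤ m → k1 < k2 →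
      Stmt19Aux.flag F m k1 ≠ Stmt19Aux.flag F m k2 := by
    intro k1 k2 hk2 h12 he
    have hk1m : k1 < m := by omega
    have h1 : Pi.single (⟨k1, hk1m⟩ : Fin m) (1 : F) ∈ Stmt19Aux.flag F m k2 :=
      Stmt19Aux.single_mem_flag hk1m h12
    rw [← he] at h1
    exact Stmt19Aux.single_not_mem_flag hk1m h1
  have hinj : Set.InjOn (fun k => Stmt19Aux.flag F m k) (Set.Iic m) := by
    intro k1 hk1 k2 hk2 he
    by_contra hne
    rcases Nat.lt_or_ge k1 k2 with h | h
    · exact hkey k1 k2 hk2 h he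
    · exact hkey k2 k1 hk1 (by omega) he.symm
  have hncard : S.ncard = m + 1 := by
    rw [hSeq, Set.ncard_image_of_injOn hinj, ← Finset.coe_Iic,
      Set.ncard_coe_finset, Nat.card_Iic]
  -- 4. nilpotency
  set T : Submodule F (Matrix (Fin m) (Fin m) F) :=
    Submodule.span F (Set.range fun i : ℕ => J ^ (i + 1)) with hT
  have hTnil : ∀ M ∈ T, IsNilpotent M := by
    intro M hM
    have h2 : ∃ N, Commute J N ∧ M = J * N := by
      refine Submodule.span_induction ?_ ?_ ?_ ?_ hM
      · rintro _ ⟨i, rfl⟩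
        exact ⟨J ^ i, (Commute.refl J).pow_right i, by show J ^ (i + 1) = J * J ^ i; rw [pow_succ']⟩
      · exact ⟨0, Commute.zero_right _, by rw [mul_zero]⟩
      · rintro M1 M2 _ _ ⟨N1, hN1, rfl⟩ ⟨N2, hN2, rfl⟩
        exact ⟨N1 + N2, hN1.add_right hN2, by rw [mul_add]⟩
      · rintro c M1 _ ⟨N1, hN1, rfl⟩
        exact ⟨c • N1, hN1.smul_right c, by rw [mul_smul_comm]⟩
    obtain ⟨N, hJN, rfl⟩ := h2
    exact ⟨m, by rw [hJN.mul_pow, Stmt19Aux.pow_m_eq_zero, zero_mul]⟩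
  have hxuT : ∀ u ∈ (a : Submodule F L), R ⁅x, u⁆ ∈ T := by
    refine hind _ ?_ ?_ ?_
    · rw [lie_zero, map_zero]; exact zero_mem _
    · intro y z hy hz; rw [lie_add, map_add]; exact add_mem hy hz
    · intro δ u hu
      have h1 : R ⁅x, u⁆ = δ • R u := by rw [hbr δ u hu, map_smul]
      rcases hcase δ u hu with h | ⟨i, him, hiδ, h⟩
      · rw [h1, h, smul_zero]; exact zero_mem _
      · rcases Nat.eq_zero_or_pos i with hi0 | hipos
        · rw [h1, ← hiδ, hi0, Nat.cast_zero, zero_smul]; exact zero_mem _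
        · rw [h1, h]
          refine Submodule.smul_mem _ _ (Submodule.smul_mem _ _ ?_)
          apply Submodule.subset_span
          exact ⟨i - 1, by show J ^ (i - 1 + 1) = J ^ i; rw [Nat.sub_add_cancel hipos]⟩
  have hbrT : ∀ y z : L, R ⁅y, z⁆ ∈ T := by
    intro y z
    obtain ⟨c, u, hu, rfl⟩ := hdec y
    obtain ⟨c', w, hw, rfl⟩ := hdec z
    rw [hbex c c' u w hu hw, map_sub, map_smul, map_smul]
    exact sub_mem (Submodule.smul_mem _ _ (hxuT w hw))
      (Submodule.smul_mem _ _ (hxuT u hu))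
  set K : LieIdeal F L :=
    { Submodule.comap R T with lie_mem := fun {y z} _ => hbrT y z } with hK
  have hKle : ⁅(⊤ : LieIdeal F L), (⊤ : LieIdeal F L)⁆ ≤ K := by
    rw [LieSubmodule.lieIdeal_oper_eq_span]
    apply LieSubmodule.lieSpan_le.mpr
    rintro y ⟨z, w, rfl⟩
    exact hbrT z w
  have hnil : ∀ y ∈ ⁅(⊤ : LieIdeal F L), (⊤ : LieIdeal F L)⁆, IsNilpotent (R y) :=
    fun y hy => hTnil _ (hKle hy)
  -- 5. nonvanishing
  have hxv : ⁅x, v⁆ = v := by rw [hbr 1 v hv1, one_smul]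
  refine ⟨hhom, hchain, hncard, hnil, v, ?_, ?_⟩
  · rw [← hxv]
    exact LieSubmodule.lie_mem_lie (LieSubmodule.mem_top x) (LieSubmodule.mem_top v)
  · rw [hRv]
    intro hc
    have h2 := congrFun (congrFun hc ⟨0, hm0⟩) ⟨1, hm⟩
    simp [hJ, jordanBlock] at h2
end
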